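/- arXiv:2106.01275 — 2 statements merged into one kernel-verified Lean document; each statement's English description precedes it below -/
import Mathlib

section
/- Let d ≥ 1 and let p > k ≥ 1. The chromatic number of the displacement graph G(d,p,k) is exactly ⌈2p/(p−k)⌉. -/
open Finset

/-- The L1 norm on the integer lattice `Fin d → ℤ`. -/
def norm1 {d : ℕ} (x : Fin d → ℤ) : ℤ := ∑ i, |x i|

/-- The first standard basis vector of `Fin d → ℤ`. -/
def e1 {d : ℕ} : Fin d → ℤ := fun i => if (i : ℕ) = 0 then 1 else 0

/-- `inN p k x y` means `y` belongs to the displaced distance-`k` neighborhood `N(x, p, k)`,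
i.e. `‖y − (x + p·e₁)‖₁ ≤ k` or `‖y − (x − p·e₁)‖₁ ≤ k`. -/
def inN {d : ℕ} (p k : ℕ) (x y : Fin d → ℤ) : Prop :=
  norm1 (y - (x + (p : ℤ) • e1)) ≤ (k : ℤ) ∨ norm1 (y - (x - (p : ℤ) • e1)) ≤ (k : ℤ)


lemma norm1_neg {d : ℕ} (x : Fin d → ℤ) : norm1 (-x) = norm1 x :=
  Finset.sum_congr rfl fun i _ => by simp

lemma inN_symm {d : ℕ} {p k : ℕ} {x y : Fin d → ℤ} (h : inN p k x y) : inN p k y x := by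
  rcases h with h | h
  · right
    have hv : x - (y - (p : ℤ) • e1) = -(y - (x + (p : ℤ) • e1)) := by abel
    rw [hv, norm1_neg]; exact h
  · left
    have hv : x - (y + (p : ℤ) • e1) = -(y - (x - (p : ℤ) • e1)) := by abel
    rw [hv, norm1_neg]; exact h

/-- The displacement graph `G(d, p, k)` on the lattice `Fin d → ℤ`:
distinct `x, y` are adjacent iff `y ∈ N(x, p, k)`. -/
def dispGraph (d p k : ℕ) : SimpleGraph (Fin d → ℤ) where
  Adj x y := x ≠ y ∧ inN p k x y
  symm := ⟨fun _ _ h => ⟨h.1.symm, inN_symm h.2⟩⟩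
  loopless := ⟨fun _ h => h.1 rfl⟩

/-! ### Auxiliary lemmas -/

lemma norm1_component {d : ℕ} (hd : 0 < d) (z : Fin d → ℤ) : |z ⟨0, hd⟩| ≤ norm1 z :=
  Finset.single_le_sum (f := fun i => |z i|) (fun _ _ => abs_nonneg _) (mem_univ _)

lemma norm1_smul_e1 {d : ℕ} (hd : 0 < d) (c : ℤ) : norm1 (c • e1 : Fin d → ℤ) = |c| := by
  unfold norm1 e1
  have : ∀ i : Fin d, |(c • fun i : Fin d => if (i : ℕ) = 0 then (1:ℤ) else 0) i|
      = if i = ⟨0, hd⟩ then |c| else 0 := by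
    intro i
    by_cases h : (i : ℕ) = 0
    · have : i = ⟨0, hd⟩ := Fin.ext h
      simp [this, h]
    · have : ¬ (i = ⟨0, hd⟩) := by
        intro he; exact h (by rw [he])
      simp [h, this]
  rw [Finset.sum_congr rfl fun i _ => this i]
  simp

section main
variable {d p k : ℕ}

lemma adj_we (hd : 0 < d) (hk : 1 ≤ k) (hpk : k < p) (s t : ℤ)
    (h1 : (p:ℤ) - k ≤ t - s) (h2 : t - s ≤ (p:ℤ) + k) :
    (dispGraph d p k).Adj (s • e1) (t • e1) := by
  have hkp : (k:ℤ) < p := by exact_mod_cast hpk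
  constructor
  · intro he
    have := congrFun he ⟨0, hd⟩
    simp [e1] at this
    omega
  · left
    have hv : t • e1 - (s • e1 + (p:ℤ) • e1) = (t - s - p) • (e1 : Fin d → ℤ) := by
      funext i; by_cases h : (i : ℕ) = 0 <;> simp [e1, h] <;> ring
    rw [hv, norm1_smul_e1 hd]
    rw [abs_le]; omega

lemma adj_comp (hd : 0 < d) {x y : Fin d → ℤ} (h : (dispGraph d p k).Adj x y) :
    ((p:ℤ) - k ≤ y ⟨0, hd⟩ - x ⟨0, hd⟩ ∧ y ⟨0, hd⟩ - x ⟨0, hd⟩ ≤ (p:ℤ) + k) ∨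
    ((p:ℤ) - k ≤ x ⟨0, hd⟩ - y ⟨0, hd⟩ ∧ x ⟨0, hd⟩ - y ⟨0, hd⟩ ≤ (p:ℤ) + k) := by
  rcases h.2 with h' | h'
  · left
    have hc := (norm1_component hd _).trans h'
    have he : ((y - (x + (p:ℤ) • e1) : Fin d → ℤ)) ⟨0, hd⟩ = y ⟨0, hd⟩ - x ⟨0, hd⟩ - p := by
      simp [e1]; ring
    rw [he, abs_le] at hc
    omega
  · right
    have hc := (norm1_component hd _).trans h'
    have he : ((y - (x - (p:ℤ) • e1) : Fin d → ℤ)) ⟨0, hd⟩ = y ⟨0, hd⟩ - x ⟨0, hd⟩ + p := by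
      simp [e1]; ring
    rw [he, abs_le] at hc
    omega

lemma colorable_of (hd : 0 < d) (hk : 1 ≤ k) (hpk : k < p) {n : ℕ} (hn0 : 0 < n)
    (hn : 2*p ≤ n * (p-k)) : (dispGraph d p k).Colorable n := by
  set A : ℤ := (p:ℤ) - k with hA
  have hkp : (k:ℤ) < p := by exact_mod_cast hpk
  have hA0 : 0 < A := by omega
  have hn0' : (0:ℤ) < (n:ℤ) := by exact_mod_cast hn0
  have key : ∀ x0 y0 : ℤ, A ≤ y0 - x0 → y0 - x0 ≤ (p:ℤ) + k →
      (x0 / A) % n ≠ (y0 / A) % n := by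
    intro x0 y0 h1 h2 heq
    have e1' : x0 / A + 1 ≤ y0 / A := by
      have h' : x0 + 1 * A ≤ y0 := by omega
      calc x0 / A + 1 = (x0 + 1*A)/A := (Int.add_mul_ediv_right x0 1 hA0.ne').symm
        _ ≤ y0 / A := Int.ediv_le_ediv hA0 h'
    have hnA : (2*p : ℤ) ≤ (n:ℤ) * A := by
      have h2' : ((p:ℤ)-(k:ℤ)) = ((p-k:ℕ):ℤ) := by omega
      rw [hA, h2']
      exact_mod_cast hn
    have e2' : y0 / A ≤ x0 / A + ((n:ℤ) - 1) := by
      have h' : y0 ≤ x0 + ((n:ℤ)-1) * A := by nlinarith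
      calc y0/A ≤ (x0 + ((n:ℤ)-1)*A)/A := Int.ediv_le_ediv hA0 h'
        _ = x0/A + ((n:ℤ)-1) := Int.add_mul_ediv_right x0 _ hA0.ne'
    have hdvd : (n:ℤ) ∣ (y0/A - x0/A) := Int.ModEq.dvd heq
    have hpos : 0 < y0/A - x0/A := by omega
    have := Int.le_of_dvd hpos hdvd
    omega
  refine ⟨SimpleGraph.Coloring.mk
    (fun x => ⟨((x ⟨0, hd⟩ / A) % n).toNat, by
      have h1 := Int.emod_nonneg (x ⟨0, hd⟩ / A) hn0'.ne'
      have h2 := Int.emod_lt_of_pos (x ⟨0, hd⟩ / A) hn0'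
      omega⟩) ?_⟩
  intro x y hadj heq
  have hval : ((x ⟨0, hd⟩ / A) % n).toNat = ((y ⟨0, hd⟩ / A) % n).toNat :=
    congrArg Fin.val heq
  have hmods : (x ⟨0, hd⟩ / A) % n = (y ⟨0, hd⟩ / A) % n := by
    have h1 := Int.emod_nonneg (x ⟨0, hd⟩ / A) hn0'.ne'
    have h2 := Int.emod_nonneg (y ⟨0, hd⟩ / A) hn0'.ne'
    clear heq key
    omega
  rcases adj_comp hd hadj with ⟨u1, u2⟩ | ⟨u1, u2⟩
  · exact key _ _ u1 u2 hmods
  · exact key _ _ u1 u2 hmods.symm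

lemma indep_card' {p k : ℕ} (hk : 1 ≤ k) (hpk : k < p) (hsm : p - k ≤ 2*k+2)
    {T : Finset ℕ} (hT : ∀ i ∈ T, i < 2*p)
    (hav : ∀ i ∈ T, ∀ j ∈ T, i < j → (j - i < p - k ∨ p + k < j - i)) :
    T.card ≤ p - k := by
  rcases T.eq_empty_or_nonempty with rfl | hne
  · simp
  set a := p - k with ha
  have ha0 : 0 < a := by omega
  set s1 := T.min' hne with hs1
  have hs1T : s1 ∈ T := T.min'_mem hne
  have hsplit : ∀ t ∈ T, t ≤ s1 + (a-1) ∨ s1 + (p+k) + 1 ≤ t := by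
    intro t ht
    have h1 := T.min'_le t ht
    rcases Nat.lt_or_ge t (s1 + a) with h | h
    · left; omega
    · rcases hav s1 hs1T t ht (by omega) with h' | h'
      · omega
      · right; omega
  set φ : ℕ → ℤ := fun t => if t ≤ s1 + (a-1) then (t:ℤ) else (t:ℤ) - 2*p with hφ
  have hpair : ∀ t ∈ T, ∀ u ∈ T, φ t - φ u ≤ (a:ℤ) - 1 := by
    intro t ht u hu
    have h1 := hsplit t ht; have h2 := hsplit u hu
    have hT1 := hT t ht; have hT2 := hT u hu
    have hm1 := T.min'_le t ht; have hm2 := T.min'_le u hu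
    simp only [hφ]
    by_cases c1 : t ≤ s1 + (a-1) <;> by_cases c2 : u ≤ s1 + (a-1)
    · rw [if_pos c1, if_pos c2]; omega
    · rw [if_pos c1, if_neg c2]
      have htu : t < u := by omega
      rcases hav t ht u hu htu with h' | h'
      · omega
      · omega
    · rw [if_neg c1, if_pos c2]; omega
    · rw [if_neg c1, if_neg c2]; omega
  have hinj : Set.InjOn φ T := by
    intro t ht u hu hequ
    have hT1 := hT t ht; have hT2 := hT u hu
    simp only [hφ] at hequ
    by_cases c1 : t ≤ s1 + (a-1) <;> by_cases c2 : u ≤ s1 + (a-1)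
    · rw [if_pos c1, if_pos c2] at hequ; omega
    · rw [if_pos c1, if_neg c2] at hequ; omega
    · rw [if_neg c1, if_pos c2] at hequ; omega
    · rw [if_neg c1, if_neg c2] at hequ; omega
  have hcard : T.card = (T.image φ).card := (Finset.card_image_of_injOn hinj).symm
  have hne' : (T.image φ).Nonempty := hne.image φ
  set m0 := (T.image φ).min' hne' with hm0
  have hsub : T.image φ ⊆ Finset.Icc m0 (m0 + ((a:ℤ) - 1)) := by
    intro u hu
    rw [Finset.mem_Icc]
    refine ⟨(T.image φ).min'_le u hu, ?_⟩
    obtain ⟨t, ht, rfl⟩ := Finset.mem_image.mp hu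
    obtain ⟨t0, ht0, hm0'⟩ := Finset.mem_image.mp ((T.image φ).min'_mem hne')
    have := hpair t ht t0 ht0
    omega
  have := Finset.card_le_card hsub
  rw [Int.card_Icc] at this
  omega

lemma lower_small (hd : 0 < d) (hk : 1 ≤ k) (hpk : k < p) (hsm : p - k ≤ 2*k+2)
    {m : ℕ} (hc : (dispGraph d p k).Colorable m) : 2*p ≤ m * (p-k) := by
  obtain ⟨C⟩ := hc
  set F : ℕ → Fin m := fun i => C ((i:ℤ) • e1) with hF
  have hfib : ∀ c ∈ (Finset.range (2*p)).image F,
      ((Finset.range (2*p)).filter (fun i => F i = c)).card ≤ p - k := by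
    intro c _
    apply indep_card' hk hpk hsm
    · intro i hi
      exact Finset.mem_range.mp (Finset.mem_filter.mp hi).1
    · intro i hi j hj hij
      have hci : F i = c := (Finset.mem_filter.mp hi).2
      have hcj : F j = c := (Finset.mem_filter.mp hj).2
      by_contra hcon
      push_neg at hcon
      have hadj : (dispGraph d p k).Adj ((i:ℤ) • e1) ((j:ℤ) • e1) := by
        apply adj_we hd hk hpk <;> omega
      exact C.valid hadj (hci.trans hcj.symm)
  have hcard := Finset.card_le_mul_card_image (f := F) (Finset.range (2*p)) (p-k) hfib
  have himg : ((Finset.range (2*p)).image F).card ≤ m :=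
    le_trans (Finset.card_le_univ _) (by simp)
  calc 2*p = (Finset.range (2*p)).card := (Finset.card_range _).symm
    _ ≤ (p-k) * ((Finset.range (2*p)).image F).card := hcard
    _ ≤ (p-k) * m := Nat.mul_le_mul_left _ himg
    _ = m * (p-k) := Nat.mul_comm _ _

lemma fin2_eq {x y z : Fin 2} (h1 : x ≠ y) (h2 : z ≠ y) : x = z := by
  have hx := x.isLt; have hy := y.isLt; have hz := z.isLt
  have h1' : x.val ≠ y.val := fun h => h1 (Fin.ext h)
  have h2' : z.val ≠ y.val := fun h => h2 (Fin.ext h)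
  exact Fin.ext (by omega)

lemma not_col2 (hd : 0 < d) (hk : 1 ≤ k) (hpk : k < p) :
    ¬ (dispGraph d p k).Colorable 2 := by
  rintro ⟨C⟩
  have hkp : (k:ℤ) < p := by exact_mod_cast hpk
  set w : ℤ → (Fin d → ℤ) := fun t => t • e1 with hw
  have main : ∀ t : ℕ, t ≤ p - k →
      C (w (-(t:ℤ))) = C (w 0) ∧ C (w ((p:ℤ) - k - t)) ≠ C (w 0) := by
    intro t
    induction t with
    | zero =>
      intro _
      refine ⟨by norm_num, ?_⟩
      have hadj : (dispGraph d p k).Adj (w 0) (w ((p:ℤ) - k - 0)) := by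
        apply adj_we hd hk hpk <;> omega
      simpa using (C.valid hadj).symm
    | succ t ih =>
      intro hle
      obtain ⟨ih1, ih2⟩ := ih (by omega)
      have htk : (t:ℤ) ≤ (p:ℤ) - k - 1 := by
        have : (t:ℤ) < ((p-k : ℕ):ℤ) := by exact_mod_cast (by omega : t < p - k)
        omega
      have hadj1 : (dispGraph d p k).Adj (w (-(t:ℤ)-1)) (w ((p:ℤ) - k - t)) := by
        apply adj_we hd hk hpk <;> omega
      have he1 : C (w (-(t:ℤ)-1)) = C (w 0) :=
        fin2_eq (C.valid hadj1) ih2.symm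
      have hadj2 : (dispGraph d p k).Adj (w (-(t:ℤ)-1)) (w ((p:ℤ) - k - t - 1)) := by
        apply adj_we hd hk hpk <;> omega
      have he2 : C (w ((p:ℤ) - k - t - 1)) ≠ C (w 0) := by
        rw [← he1]
        exact (C.valid hadj2).symm
      constructor
      · have : (-(↑(t+1) : ℤ)) = -(t:ℤ) - 1 := by push_cast; ring
        rw [this]; exact he1
      · have : ((p:ℤ) - k - (↑(t+1):ℤ)) = (p:ℤ) - k - t - 1 := by push_cast; ring
        rw [this]; exact he2
  obtain ⟨_, h2⟩ := main (p - k) le_rfl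
  apply h2
  have : ((p:ℤ) - k - ((p - k : ℕ):ℤ)) = 0 := by
    have : ((p-k:ℕ):ℤ) = (p:ℤ) - k := by omega
    omega
  rw [this]

end main

/-- For `d ≥ 1` and `p > k ≥ 1`, the chromatic number of the displacement graph `G(d, p, k)`
is exactly `⌈2p / (p − k)⌉`. -/
theorem stmt4 (d : ℕ) (hd : 0 < d) (p k : ℕ) (hk : 1 ≤ k) (hpk : k < p) :
    (dispGraph d p k).chromaticNumber =
      ((⌈(2 * (p : ℚ)) / ((p : ℚ) - (k : ℚ))⌉.toNat : ℕ) : ℕ∞) := by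
  set x : ℚ := (2 * (p : ℚ)) / ((p : ℚ) - (k : ℚ)) with hx
  set n : ℕ := ⌈x⌉.toNat with hn
  have hkp : (k:ℚ) < p := by exact_mod_cast hpk
  have hA0 : (0:ℚ) < (p:ℚ) - k := by linarith
  have hp0 : (0:ℚ) < p := by exact_mod_cast (by omega : 0 < p)
  have hxpos : 0 < x := by
    rw [hx]; exact div_pos (by linarith) hA0
  have hceil : (0:ℤ) ≤ ⌈x⌉ := Int.ceil_nonneg hxpos.le
  have hnZ : ((n:ℤ)) = ⌈x⌉ := Int.toNat_of_nonneg hceil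
  have hge : 2*p ≤ n * (p - k) := by
    have h1 : x ≤ (n:ℚ) := by
      have := Int.le_ceil x
      rw [← hnZ] at this
      exact_mod_cast this
    rw [hx, div_le_iff₀ hA0] at h1
    have h2 : (2*p : ℚ) ≤ (n : ℚ) * ((p:ℚ) - k) := by linarith
    have h3 : ((p:ℚ) - k) = ((p - k : ℕ) : ℚ) := by
      rw [Nat.cast_sub hpk.le]
    rw [h3, ← Nat.cast_mul, ← Nat.cast_ofNat] at h2
    exact_mod_cast h2
  have hmin : ∀ m : ℕ, 2*p ≤ m * (p - k) → n ≤ m := by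
    intro m hm
    have h3 : ((p:ℚ) - k) = ((p - k : ℕ) : ℚ) := by
      rw [Nat.cast_sub hpk.le]
    have h1 : x ≤ (m:ℚ) := by
      rw [hx, div_le_iff₀ hA0, h3]
      exact_mod_cast hm
    have h2 : ⌈x⌉ ≤ (m:ℤ) := Int.ceil_le.mpr (by exact_mod_cast h1)
    omega
  have hn3 : 3 ≤ n := by
    have h1 : (2:ℚ) < x := by
      rw [hx, lt_div_iff₀ hA0]
      have : (1:ℚ) ≤ (k:ℚ) := by exact_mod_cast hk
      linarith
    have h2 : (2:ℤ) < ⌈x⌉ := Int.lt_ceil.mpr (by exact_mod_cast h1)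
    omega
  have hcol : (dispGraph d p k).Colorable n := colorable_of hd hk hpk (by omega) hge
  have hlow : ∀ m : ℕ, (dispGraph d p k).Colorable m → n ≤ m := by
    intro m hm
    by_cases hsm : p - k ≤ 2*k + 2
    · exact hmin m (lower_small hd hk hpk hsm hm)
    · have hm3 : 3 ≤ m := by
        by_contra hcon
        exact not_col2 hd hk hpk (hm.mono (by omega))
      have hn_le3 : n ≤ 3 := hmin 3 (by omega)
      omega
  refine le_antisymm hcol.chromaticNumber_le ?_
  rw [SimpleGraph.chromaticNumber]
  exact le_iInf₂ fun m hm => by exact_mod_cast hlow m hm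
end

section
/- Let d ≥ 1 and let p, k be natural numbers with p < k and k + p even, and set α = (k+p)/2 and β = (k−p)/2. Then the chromatic number of the displacement graph G(d,p,k) is at least the cardinality of the finite set C(d,α,β). -/
open Finset

/-- `∑_{i=2}^d |x_i|` : the sum of absolute values of all but the first coordinate. -/
def tailSum {d : ℕ} (x : Fin d → ℤ) : ℤ :=
  ∑ i ∈ Finset.univ.filter (fun i : Fin d => (i : ℕ) ≠ 0), |x i|


/-- The set `C(d, α, β) = { x : ‖x‖₁ ≤ α and ∑_{i=2}^d |x_i| ≤ β }`. -/
def Cset (d : ℕ) (α β : ℤ) : Set (Fin d → ℤ) := {x | norm1 x ≤ α ∧ tailSum x ≤ β}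

lemma norm1_split {d : ℕ} (hd : 0 < d) (x : Fin d → ℤ) :
    norm1 x = |x ⟨0, hd⟩| + tailSum x := by
  classical
  have h := Finset.sum_filter_add_sum_filter_not Finset.univ
    (fun i : Fin d => (i : ℕ) = 0) (fun i => |x i|)
  have h1 : Finset.univ.filter (fun i : Fin d => (i : ℕ) = 0) = {⟨0, hd⟩} := by
    ext i; simp [Fin.ext_iff]
  rw [h1] at h
  simp only [Finset.sum_singleton] at h
  unfold norm1 tailSum
  rw [← h]

lemma tailSum_le {d : ℕ} (x : Fin d → ℤ) {y : Fin d → ℤ}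
    (h : ∀ i : Fin d, (i : ℕ) ≠ 0 → x i = y i) : tailSum x = tailSum y := by
  unfold tailSum
  apply Finset.sum_congr rfl
  intro i hi
  simp only [Finset.mem_filter] at hi
  rw [h i hi.2]

lemma norm1_sub_le {d : ℕ} (x y : Fin d → ℤ) :
    norm1 (y - x) ≤ norm1 y + norm1 x := by
  unfold norm1
  rw [← Finset.sum_add_distrib]
  exact Finset.sum_le_sum fun i _ => abs_sub (y i) (x i)

lemma tailSum_sub_le {d : ℕ} (x y : Fin d → ℤ) :
    tailSum (y - x) ≤ tailSum y + tailSum x := by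
  unfold tailSum
  rw [← Finset.sum_add_distrib]
  exact Finset.sum_le_sum fun i _ => abs_sub (y i) (x i)

lemma cset_finite (d : ℕ) (α β : ℤ) : (Cset d α β).Finite := by
  apply Set.Finite.subset (Set.Finite.pi (fun i : Fin d => Set.finite_Icc (-α) α))
  intro x hx
  simp only [Set.mem_pi, Set.mem_univ, Set.mem_Icc, forall_true_left]
  intro i
  have h1 : |x i| ≤ norm1 x := by
    unfold norm1
    exact Finset.single_le_sum (f := fun i => |x i|) (fun j _ => abs_nonneg _)
      (Finset.mem_univ i)
  have := h1.trans hx.1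
  constructor <;> [linarith [neg_abs_le (x i)]; linarith [le_abs_self (x i)]]

lemma cset_clique (d : ℕ) (hd : 0 < d) (p k : ℕ)
    (α β : ℤ) (hα : 2 * α = (k : ℤ) + (p : ℤ)) (hβ : 2 * β = (k : ℤ) - (p : ℤ)) :
    (dispGraph d p k).IsClique (Cset d α β) := by
  intro x hx y hy hxy
  refine (⟨hxy, ?_⟩ : x ≠ y ∧ inN p k x y)
  set i0 : Fin d := ⟨0, hd⟩
  have hz : norm1 (y - x) ≤ (k : ℤ) + (p : ℤ) := by
    have := norm1_sub_le x y
    have := hx.1; have := hy.1; linarith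
  have ht : tailSum (y - x) ≤ (k : ℤ) - (p : ℤ) := by
    have := tailSum_sub_le x y
    have := hx.2; have := hy.2; linarith
  have hsplit := norm1_split hd (y - x)
  have hcoord : ∀ c : ℤ, norm1 (y - x + c • e1) = |(y - x) i0 + c| + tailSum (y - x) := by
    intro c
    rw [norm1_split hd]
    congr 1
    · congr 1
      simp [e1, i0]
    · apply tailSum_le
      intro i hi
      simp [e1, hi]
  have habs : 0 ≤ tailSum (y - x) := by
    unfold tailSum; exact Finset.sum_nonneg fun i _ => abs_nonneg _
  rcases le_or_gt 0 ((y - x) i0) with h0 | h0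
  · left
    have : y - (x + (p : ℤ) • e1) = y - x + (-(p : ℤ)) • e1 := by
      simp; abel
    rw [this, hcoord]
    have h1 : |(y - x) i0| = (y - x) i0 := abs_of_nonneg h0
    rw [h1] at hsplit
    rcases abs_sub_le_iff.mp (le_refl |(y - x) i0 + -(p:ℤ)|) with _
    have : |(y - x) i0 + -(p : ℤ)| ≤ max ((y - x) i0 - p) (p - (y - x) i0) := by
      rw [abs_le]; constructor <;> simp <;> omega
    rcases le_max_iff.mp this with h | h <;> linarith
  · right
    have : y - (x - (p : ℤ) • e1) = y - x + (p : ℤ) • e1 := by abel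
    rw [this, hcoord]
    have h1 : |(y - x) i0| = -((y - x) i0) := abs_of_neg h0
    rw [h1] at hsplit
    have : |(y - x) i0 + (p : ℤ)| ≤ max (-(y - x) i0 - p) (p + (y - x) i0) := by
      rw [abs_le]; constructor <;> simp <;> omega
    rcases le_max_iff.mp this with h | h <;> linarith

/-- If `p < k`, `k + p` is even, `α = (k+p)/2` and `β = (k−p)/2`, then the chromatic number
of the displacement graph `G(d, p, k)` is at least the cardinality of `C(d, α, β)`. -/
theorem stmt9 (d : ℕ) (hd : 0 < d) (p k : ℕ) (hpk : p < k) (heven : Even (k + p))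
    (α β : ℤ) (hα : 2 * α = (k : ℤ) + (p : ℤ)) (hβ : 2 * β = (k : ℤ) - (p : ℤ)) :
    (((Cset d α β).ncard : ℕ) : ℕ∞) ≤ (dispGraph d p k).chromaticNumber := by
  classical
  have hfin := cset_finite d α β
  have hcl := cset_clique d hd p k α β hα hβ
  rw [Set.ncard_eq_toFinset_card _ hfin]
  have hcl' : (dispGraph d p k).IsClique (hfin.toFinset : Finset (Fin d → ℤ)) := by
    rwa [Set.Finite.coe_toFinset]
  exact hcl'.card_le_chromaticNumber
end
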